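/- Fix reals a, r > 0, b ∈ (a, a + min(1, r)), and β ∈ ((a/b)^(1/n), 1) where n ≥ m are positive integers. For 0 ≤ j ≤ m−1 define p_j = (b·β^j − a, sqrt(1 − (b·β^j − a)²), 0), and for 0 ≤ k ≤ n−1 define q_k = (−b·β^k, 0, r·sqrt(1 − ((a − b·β^k)/r)²)). Then the squared distance |p_j q_k|² equals 2b²β^(j+k) + 1 + r² − a². -/

import Mathlib

noncomputable def pt (x y z : ℝ) : EuclideanSpace ℝ (Fin 3) := WithLp.toLp 2 ![x, y, z]

/-- In the perpendicular-circles construction, the squared distance between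
`p_j = (b·β^j − a, √(1 − (b·β^j − a)²), 0)` and
`q_k = (−b·β^k, 0, r·√(1 − ((a − b·β^k)/r)²))` equals `2b²β^(j+k) + 1 + r² − a²`. -/
theorem perpendicular_circles_sq_dist (a r b β : ℝ) (m n : ℕ)
    (ha : 0 < a) (hr : 0 < r) (hmn : m ≤ n) (hm : 1 ≤ m)
    (hb : b ∈ Set.Ioo a (a + min 1 r))
    (hβ : β ∈ Set.Ioo ((a / b) ^ ((1 : ℝ) / n)) 1)
    (j k : ℕ) (hj : j ≤ m - 1) (hk : k ≤ n - 1) :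
    dist (pt (b * β ^ j - a) (Real.sqrt (1 - (b * β ^ j - a) ^ 2)) 0)
        (pt (-(b * β ^ k)) 0 (r * Real.sqrt (1 - ((a - b * β ^ k) / r) ^ 2))) ^ 2 =
      2 * b ^ 2 * β ^ (j + k) + 1 + r ^ 2 - a ^ 2 := by
  obtain ⟨hab, hbmin⟩ := hb
  obtain ⟨hβc, hβ1⟩ := hβ
  have hb0 : 0 < b := ha.trans hab
  have hn1 : 1 ≤ n := hm.trans hmn
  have hc0 : 0 < (a / b) ^ ((1 : ℝ) / n) := Real.rpow_pos_of_pos (by positivity) _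
  have hβ0 : 0 < β := hc0.trans hβc
  have hcn : ((a / b) ^ ((1 : ℝ) / n)) ^ n = a / b := by
    rw [← Real.rpow_natCast ((a / b) ^ ((1 : ℝ) / n)) n, ← Real.rpow_mul (by positivity)]
    rw [one_div, inv_mul_cancel₀ (by exact_mod_cast (by omega : n ≠ 0)), Real.rpow_one]
  have key : ∀ i : ℕ, i ≤ n - 1 → a < b * β ^ i ∧ b * β ^ i - a < min 1 r := by
    intro i hi
    have h1 : a / b < β ^ i := by
      calc a / b = ((a / b) ^ ((1 : ℝ) / n)) ^ n := hcn.symm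
        _ < β ^ n := pow_lt_pow_left₀ hβc hc0.le (by omega)
        _ ≤ β ^ i := pow_le_pow_of_le_one hβ0.le hβ1.le (by omega)
    have hβi1 : β ^ i ≤ 1 := pow_le_one₀ hβ0.le hβ1.le
    constructor
    · have := (div_lt_iff₀ hb0).mp h1
      linarith [this]
    · nlinarith
  have hjn : j ≤ n - 1 := le_trans hj (by omega)
  obtain ⟨hj1, hj2⟩ := key j hjn
  obtain ⟨hk1, hk2⟩ := key k hk
  have hj2' : b * β ^ j - a < 1 := lt_of_lt_of_le hj2 (min_le_left _ _)
  have hk2' : b * β ^ k - a < r := lt_of_lt_of_le hk2 (min_le_right _ _)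
  have hA : 0 ≤ 1 - (b * β ^ j - a) ^ 2 := by nlinarith
  have hB : 0 ≤ 1 - ((a - b * β ^ k) / r) ^ 2 := by
    rw [div_pow, sub_nonneg, div_le_one (by positivity)]
    nlinarith
  have e1 : Real.sqrt (1 - (b * β ^ j - a) ^ 2) ^ 2 = 1 - (b * β ^ j - a) ^ 2 :=
    Real.sq_sqrt hA
  have e2 : (r * Real.sqrt (1 - ((a - b * β ^ k) / r) ^ 2)) ^ 2
      = r ^ 2 - (a - b * β ^ k) ^ 2 := by
    rw [mul_pow, Real.sq_sqrt hB]
    field_simp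
  have hd : dist (pt (b * β ^ j - a) (Real.sqrt (1 - (b * β ^ j - a) ^ 2)) 0)
        (pt (-(b * β ^ k)) 0 (r * Real.sqrt (1 - ((a - b * β ^ k) / r) ^ 2)))
      = Real.sqrt ((b * β ^ j - a - -(b * β ^ k)) ^ 2
        + (Real.sqrt (1 - (b * β ^ j - a) ^ 2) - 0) ^ 2
        + (0 - r * Real.sqrt (1 - ((a - b * β ^ k) / r) ^ 2)) ^ 2) := by
    rw [EuclideanSpace.dist_eq]
    congr 1
    rw [Fin.sum_univ_three]
    simp only [pt, Matrix.cons_val_zero, Matrix.cons_val_one, Matrix.head_cons,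
      Matrix.cons_val_two, Matrix.tail_cons, Real.dist_eq, sq_abs]
  rw [hd, Real.sq_sqrt (by positivity), pow_add]
  rw [sub_zero, zero_sub, neg_sq, e1, e2]
  ring
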